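/- Let A be a Noetherian ring, I ⊂ A a proper ideal not contained in any minimal prime, and v_1,…,v_s the Rees valuations of I. Then for every f ∈ A, ν̄_I(f) = min{ v_i(f)/v_i(I) : i = 1,…,s }. -/

import Mathlib

open Filter ENNReal Topology

/-- The order `ν_I(f) = sup { m ∈ ℕ : f ∈ I^m }`, valued in `ℕ∞`. -/
noncomputable def nuI {A : Type*} [CommRing A] (I : Ideal A) (f : A) : ℕ∞ :=
  sSup {n : ℕ∞ | ∃ m : ℕ, n = m ∧ f ∈ I ^ m}

/-- The asymptotic Samuel function `ν̄_I(f) = lim_n ν_I(f^n)/n`, valued in `ℝ≥0∞`. -/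
noncomputable def nubar {A : Type*} [CommRing A] (I : Ideal A) (f : A) : ℝ≥0∞ :=
  Filter.atTop.limsup fun n : ℕ => (nuI I (f ^ n) : ℝ≥0∞) / (n : ℝ≥0∞)

/-- `x` is integral over the ideal `J`: it satisfies an equation
`x^n + c_1 x^(n-1) + ... + c_n = 0` with `c_i ∈ J^i`. -/
def IsIntegralOverIdeal {A : Type*} [CommRing A] (J : Ideal A) (x : A) : Prop :=
  ∃ n : ℕ, 0 < n ∧ ∃ c : ℕ → A, (∀ i ∈ Finset.Icc 1 n, c i ∈ J ^ i) ∧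
    x ^ n + ∑ i ∈ Finset.Icc 1 n, c i * x ^ (n - i) = 0

lemma mem_pow_iff_le_nuI {A : Type*} [CommRing A] (I : Ideal A) (g : A) (m : ℕ) :
    g ∈ I ^ m ↔ (m : ℕ∞) ≤ nuI I g := by
  constructor
  · intro h
    exact le_sSup ⟨m, rfl, h⟩
  · intro h
    rcases Nat.eq_zero_or_pos m with hm | hm
    · subst hm; simp [Ideal.one_eq_top]
    by_contra hg
    have hb : nuI I g ≤ ((m - 1 : ℕ) : ℕ∞) := by
      apply sSup_le
      rintro n ⟨m', rfl, hm'⟩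
      have : m' < m := by
        by_contra hle
        exact hg (Ideal.pow_le_pow_right (le_of_not_gt hle) hm')
      exact_mod_cast Nat.le_sub_one_of_lt this
    have : (m : ℕ∞) ≤ ((m - 1 : ℕ) : ℕ∞) := le_trans h hb
    have := Nat.cast_le (α := ℕ∞) |>.mp this
    omega

lemma nuI_le_iff {A : Type*} [CommRing A] (I : Ideal A) (g : A) (x : ℝ≥0∞) :
    (nuI I g : ℝ≥0∞) ≤ x ↔ ∀ m : ℕ, g ∈ I ^ m → (m : ℝ≥0∞) ≤ x := by
  constructor
  · intro h m hm
    refine le_trans ?_ h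
    exact_mod_cast (mem_pow_iff_le_nuI I g m).1 hm
  · intro h
    cases hn : nuI I g with
    | top =>
      rcases eq_or_ne x ⊤ with rfl | hx
      · exact le_top
      obtain ⟨m, hm⟩ := ENNReal.exists_nat_gt hx
      exact absurd (h m ((mem_pow_iff_le_nuI I g m).2 (by rw [hn]; exact le_top))) (not_le.2 hm)
    | coe m =>
      have : g ∈ I ^ m := (mem_pow_iff_le_nuI I g m).2 (by rw [hn])
      have h2 := h m this
      exact_mod_cast h2

lemma isIntegral_of_mem {A : Type*} [CommRing A] (J : Ideal A) (x : A) (h : x ∈ J) :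
    IsIntegralOverIdeal J x := by
  refine ⟨1, one_pos, fun _ => -x, ?_, ?_⟩
  · intro i hi
    simp only [Finset.mem_Icc] at hi
    have : i = 1 := by omega
    subst this
    simpa using neg_mem h
  · simp

lemma pow_mem_of_isIntegral {A : Type*} [CommRing A] (J : Ideal A) (x : A)
    (h : IsIntegralOverIdeal J x) :
    ∃ n : ℕ, 0 < n ∧ ∀ N : ℕ, x ^ (n + N) ∈ J ^ (N + 1) := by
  obtain ⟨n, hn, c, hc, heq⟩ := h
  have hx : x ^ n = ∑ i ∈ Finset.Icc 1 n, (-c i) * x ^ (n - i) := by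
    have := heq
    rw [add_eq_zero_iff_eq_neg] at this
    rw [this, ← Finset.sum_neg_distrib]
    exact Finset.sum_congr rfl fun i _ => by ring
  refine ⟨n, hn, fun N => ?_⟩
  suffices H : ∀ N : ℕ, ∃ d : ℕ → A, (∀ i ∈ Finset.Icc 1 n, d i ∈ J ^ (N + i)) ∧
      x ^ (n + N) = ∑ i ∈ Finset.Icc 1 n, d i * x ^ (n - i) by
    obtain ⟨d, hd, hxe⟩ := H N
    rw [hxe]
    apply Ideal.sum_mem
    intro i hi
    have h1 : (N + 1 : ℕ) ≤ N + i := by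
      simp only [Finset.mem_Icc] at hi; omega
    exact Ideal.mul_mem_right _ _ (Ideal.pow_le_pow_right h1 (hd i hi))
  intro N
  induction N with
  | zero =>
    refine ⟨fun i => -c i, fun i hi => by simpa using neg_mem (hc i hi), by simpa using hx⟩
  | succ N ih =>
    obtain ⟨d, hd, hxe⟩ := ih
    have h1n : 1 ∈ Finset.Icc 1 n := by simp [Finset.mem_Icc]; omega
    refine ⟨fun j => (-(d 1)) * c j + (if j < n then d (j + 1) else 0), ?_, ?_⟩
    · intro j hj
      simp only [Finset.mem_Icc] at hj
      apply Ideal.add_mem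
      · have h1 : d 1 ∈ J ^ (N + 1) := hd 1 h1n
        have h2 : c j ∈ J ^ j := hc j (by simp [Finset.mem_Icc]; omega)
        have := Ideal.mul_mem_mul (neg_mem h1) h2
        rwa [← pow_add] at this
      · by_cases hjn : j < n
        · simp only [if_pos hjn]
          have := hd (j + 1) (by simp [Finset.mem_Icc]; omega)
          have hle : (N + 1 + j : ℕ) ≤ N + (j + 1) := by omega
          exact Ideal.pow_le_pow_right hle this
        · simp [hjn]
    · have hsplit : Finset.Icc 1 n = insert 1 (Finset.Icc 2 n) := by
        ext j; simp [Finset.mem_Icc]; omega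
      have h11 : n - 1 + 1 = n := by omega
      have hmap : Finset.Icc 2 n = Finset.map ⟨fun j => j + 1, fun a b h => by simpa using h⟩
            (Finset.Icc 1 (n - 1)) := by
        ext j; simp only [Finset.mem_Icc, Finset.mem_map, Function.Embedding.coeFn_mk]
        constructor
        · intro h; exact ⟨j - 1, by omega, by show j - 1 + 1 = j; omega⟩
        · rintro ⟨a, ha, rfl⟩; show 2 ≤ a + 1 ∧ a + 1 ≤ n; omega
      symm
      calc ∑ j ∈ Finset.Icc 1 n, ((-(d 1)) * c j + (if j < n then d (j + 1) else 0)) * x ^ (n - j)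
          = ∑ j ∈ Finset.Icc 1 n, (d 1 * (-c j * x ^ (n - j))
              + (if j < n then d (j + 1) else 0) * x ^ (n - j)) := by
            exact Finset.sum_congr rfl fun j _ => by ring
        _ = d 1 * ∑ j ∈ Finset.Icc 1 n, (-c j) * x ^ (n - j)
              + ∑ j ∈ Finset.Icc 1 n, (if j < n then d (j + 1) else 0) * x ^ (n - j) := by
            rw [Finset.sum_add_distrib, Finset.mul_sum]
        _ = d 1 * x ^ n
              + ∑ j ∈ Finset.Icc 1 (n - 1), d (j + 1) * x ^ (n - j) := by
            rw [← hx]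
            congr 1
            rw [← Finset.sum_subset (Finset.Icc_subset_Icc_right (by omega : n - 1 ≤ n))
              (fun j hj hnj => by
                have : ¬ j < n := by
                  simp only [Finset.mem_Icc] at hj hnj; omega
                simp [this])]
            apply Finset.sum_congr rfl
            intro j hj
            simp only [Finset.mem_Icc] at hj
            rw [if_pos (by omega : j < n)]
        _ = d 1 * x ^ (n - 1 + 1) + ∑ i ∈ Finset.Icc 2 n, d i * x ^ (n - i + 1) := by
            rw [h11, hmap, Finset.sum_map]
            congr 1
            apply Finset.sum_congr rfl
            intro j hj
            simp only [Finset.mem_Icc] at hj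
            show d (j + 1) * x ^ (n - j) = d (j + 1) * x ^ (n - (j + 1) + 1)
            congr 2
            omega
        _ = ∑ i ∈ Finset.Icc 1 n, d i * x ^ (n - i + 1) := by
            rw [hsplit, Finset.sum_insert (by simp)]
        _ = (∑ i ∈ Finset.Icc 1 n, d i * x ^ (n - i)) * x := by
            rw [Finset.sum_mul]
            exact Finset.sum_congr rfl fun i _ => by ring
        _ = x ^ (n + (N + 1)) := by rw [← hxe]; ring

/-- Let `A` be a Noetherian ring and `I` a proper ideal not contained in any minimal
prime, and let `v_1, …, v_s` be the Rees valuations of `I`: a finite family of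
(additive, `ℕ∞`-valued) valuations of `A`, with `v_i(I) := min {v_i(g) : g ∈ I}`
positive and finite, such that for every `n` the integral closure of `I^n` is
`∩_i {f : v_i(f) ≥ n · v_i(I)}`.  Then `ν̄_I(f) = min_i v_i(f)/v_i(I)` for every `f`. -/
theorem nubar_eq_min_reesValuations {A : Type*} [CommRing A] [IsNoetherianRing A]
    (I : Ideal A) (hI : I ≠ ⊤) (hmin : ∀ p ∈ minimalPrimes A, ¬ I ≤ p)
    (s : ℕ) (hs : 0 < s) (v : Fin s → A → ℕ∞)
    (hval : ∀ i, v i 0 = ⊤ ∧ v i 1 = 0 ∧ (∀ f g : A, v i (f * g) = v i f + v i g) ∧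
      (∀ f g : A, min (v i f) (v i g) ≤ v i (f + g)))
    (vI : Fin s → ℕ∞) (hvI : ∀ i, vI i = sInf {n : ℕ∞ | ∃ g ∈ I, n = v i g})
    (hvIpos : ∀ i, 0 < vI i ∧ vI i ≠ ⊤)
    (hRees : ∀ n : ℕ, ∀ f : A,
      IsIntegralOverIdeal (I ^ n) f ↔ ∀ i, (n : ℕ∞) * vI i ≤ v i f) :
    ∀ f : A, nubar I f = ⨅ i, (v i f : ℝ≥0∞) / (vI i : ℝ≥0∞) := by
  have hvmul : ∀ i (g : A) (k : ℕ), v i (g ^ k) = (k : ℕ∞) * v i g := by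
    intro i g k
    induction k with
    | zero => simp [(hval i).2.1]
    | succ k ih =>
      rw [pow_succ, (hval i).2.2.1, ih]
      push_cast
      ring
  intro f
  -- key : membership in powers gives valuation inequalities
  have hkey : ∀ (m N : ℕ), f ^ N ∈ I ^ m → ∀ i, (m : ℕ∞) * vI i ≤ (N : ℕ∞) * v i f := by
    intro m N hm i
    have := (hRees m (f ^ N)).1 (isIntegral_of_mem _ _ hm) i
    rwa [hvmul i f N] at this
  have hinj : Function.Injective (fun x : ℕ∞ => (x : ℝ≥0∞)) :=
    ENat.toENNReal_strictMono.injective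
  have hu0 : ∀ i, (vI i : ℝ≥0∞) ≠ 0 := by
    intro i h
    exact (hvIpos i).1.ne' (hinj (by simpa using h))
  have huT : ∀ i, (vI i : ℝ≥0∞) ≠ ⊤ := by
    intro i h
    exact (hvIpos i).2 (hinj (by simpa using h))
  apply le_antisymm
  · -- upper bound
    refine Filter.limsup_le_of_le (by isBoundedDefault) ?_
    filter_upwards [Filter.eventually_ge_atTop 1] with N hN
    refine le_iInf fun i => ?_
    have hN0 : (N : ℝ≥0∞) ≠ 0 := Nat.cast_ne_zero.2 (by omega)
    have hNT : (N : ℝ≥0∞) ≠ ⊤ := by simp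
    rw [ENNReal.div_le_iff_le_mul (Or.inl hN0) (Or.inl hNT)]
    rw [nuI_le_iff]
    intro m hm
    have h1 := hkey m N hm i
    have h2 : (m : ℝ≥0∞) * (vI i : ℝ≥0∞) ≤ (N : ℝ≥0∞) * (v i f : ℝ≥0∞) := by
      have := ENat.toENNReal_le.2 h1
      push_cast at this
      exact this
    rw [← ENNReal.le_div_iff_mul_le (Or.inl (hu0 i)) (Or.inl (huT i))] at h2
    calc (m : ℝ≥0∞) ≤ (N : ℝ≥0∞) * (v i f : ℝ≥0∞) / (vI i : ℝ≥0∞) := h2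
      _ = (v i f : ℝ≥0∞) / (vI i : ℝ≥0∞) * (N : ℝ≥0∞) := by
          rw [mul_comm ((N : ℝ≥0∞)) _, ENNReal.mul_div_right_comm]
  · -- lower bound
    set L := ⨅ i, (v i f : ℝ≥0∞) / (vI i : ℝ≥0∞) with hL
    refine le_of_forall_lt fun c hc => ?_
    obtain ⟨c', hcc', hc'L⟩ := exists_between hc
    refine lt_of_lt_of_le hcc' ?_
    -- find m, k
    have hstep1 : ∃ m k : ℕ, 0 < k ∧ c' < (m : ℝ≥0∞) / (k : ℝ≥0∞) ∧
        ∀ i, (m : ℕ∞) * vI i ≤ (k : ℕ∞) * v i f := by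
      by_cases hA : ∀ i, v i f = ⊤
      · obtain ⟨m, hm⟩ := ENNReal.exists_nat_gt (hc'L.trans_le le_top).ne
        refine ⟨m, 1, one_pos, by simpa using hm, fun i => ?_⟩
        rw [hA i]
        simp
      · push_neg at hA
        obtain ⟨i₀, hi₀⟩ := hA
        have hLT : L < ⊤ := by
          refine lt_of_le_of_lt (iInf_le _ i₀) ?_
          refine ENNReal.div_lt_top (fun h => hi₀ (hinj (by simpa using h))) (hu0 i₀)
        obtain ⟨q, hq0, hcq, hqL⟩ := ENNReal.lt_iff_exists_rat_btwn.1 hc'L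
        set m := q.num.toNat with hm
        set k := q.den with hk
        have hk0 : 0 < k := q.pos
        have hqmk : ((Real.toNNReal (q : ℝ) : ℝ≥0∞)) = (m : ℝ≥0∞) / (k : ℝ≥0∞) := by
          rw [ENNReal.eq_div_iff (by exact_mod_cast hk0.ne') (by simp)]
          rw [← ENNReal.coe_natCast, ← ENNReal.coe_natCast, ← ENNReal.coe_mul,
            ENNReal.coe_inj]
          have hmq : ((m : ℤ) : ℝ) = ((q.num : ℤ) : ℝ) := by
            exact_mod_cast congrArg (fun z : ℤ => (z : ℝ))
              (Int.toNat_of_nonneg (Rat.num_nonneg.2 hq0))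
          have hden : (q.den : ℝ) ≠ 0 := by
            exact_mod_cast q.pos.ne'
          ext
          push_cast
          rw [Real.coe_toNNReal _ (by exact_mod_cast hq0), Rat.cast_def]
          rw [show ((m:ℕ):ℝ) = ((q.num : ℤ) : ℝ) by exact_mod_cast hmq]
          field_simp
          rw [hk]; ring
        refine ⟨m, k, hk0, by rwa [hqmk] at hcq, fun i => ?_⟩
        have hle : (m : ℝ≥0∞) / (k : ℝ≥0∞) ≤ (v i f : ℝ≥0∞) / (vI i : ℝ≥0∞) := by
          rw [← hqmk]
          exact le_trans hqL.le (iInf_le _ i)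
        rcases eq_or_ne (v i f) ⊤ with hvT | hvT
        · rw [hvT, ENat.mul_top (by exact_mod_cast hk0.ne' : (k:ℕ∞) ≠ 0)]
          exact le_top
        · rw [← ENat.toENNReal_le]
          push_cast
          have hk0' : (k : ℝ≥0∞) ≠ 0 := by exact_mod_cast hk0.ne'
          have hkT : (k : ℝ≥0∞) ≠ ⊤ := by simp
          have h1 : (m : ℝ≥0∞) ≤ (v i f : ℝ≥0∞) / (vI i : ℝ≥0∞) * (k : ℝ≥0∞) := by
            rw [← ENNReal.div_le_iff_le_mul (Or.inl hk0') (Or.inl hkT)]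
            exact hle
          calc (m : ℝ≥0∞) * (vI i : ℝ≥0∞)
              ≤ (v i f : ℝ≥0∞) / (vI i : ℝ≥0∞) * (k : ℝ≥0∞) * (vI i : ℝ≥0∞) :=
                mul_le_mul_left h1 _
            _ = (k : ℝ≥0∞) * ((v i f : ℝ≥0∞) / (vI i : ℝ≥0∞) * (vI i : ℝ≥0∞)) := by ring
            _ = (k : ℝ≥0∞) * (v i f : ℝ≥0∞) := by
                rw [ENNReal.div_mul_cancel (hu0 i) (huT i)]
    obtain ⟨m, k, hk0, hcmk, hmk⟩ := hstep1
    -- f^k is integral over I^m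
    have hint : IsIntegralOverIdeal (I ^ m) (f ^ k) := by
      rw [hRees]
      intro i
      rw [hvmul]
      exact hmk i
    obtain ⟨n, hn0, hpow⟩ := pow_mem_of_isIntegral _ _ hint
    -- members : f ^ (k * (n + N)) ∈ I ^ (m * (N + 1))
    have hmem : ∀ N : ℕ, f ^ (k * (n + N)) ∈ I ^ (m * (N + 1)) := by
      intro N
      rw [pow_mul, pow_mul]
      exact hpow N
    -- tendsto
    have htend : Filter.Tendsto
        (fun N : ℕ => ((m * (N + 1) : ℕ) : ℝ≥0∞) / ((k * (n + N) : ℕ) : ℝ≥0∞))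
        atTop (𝓝 ((m : ℝ≥0∞) / (k : ℝ≥0∞))) := by
      have hk' : (k : ℝ) ≠ 0 := by exact_mod_cast hk0.ne'
      have hreal : Filter.Tendsto
          (fun N : ℕ => ((m * (N + 1) : ℕ) : ℝ) / ((k * (n + N) : ℕ) : ℝ))
          atTop (𝓝 ((m : ℝ) / (k : ℝ))) := by
        have h1 : Filter.Tendsto (fun N : ℕ => ((N : ℝ)) / ((N : ℝ) + ((n : ℝ) - 1)))
            atTop (𝓝 1) := tendsto_natCast_div_add_atTop ((n : ℝ) - 1)
        have h2 := (h1.comp (tendsto_add_atTop_nat 1)).const_mul ((m : ℝ) / (k : ℝ))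
        rw [mul_one] at h2
        refine h2.congr fun N => ?_
        have hne : ((N : ℝ) + 1) + ((n : ℝ) - 1) ≠ 0 := by
          have : (1 : ℝ) ≤ (n : ℝ) := by exact_mod_cast hn0
          nlinarith [Nat.cast_nonneg (α := ℝ) N]
        simp only [Function.comp]
        push_cast
        rw [div_mul_div_comm]
        congr 1 <;> ring
      have hpos : ∀ N : ℕ, (0 : ℝ) < ((k * (n + N) : ℕ) : ℝ) := by
        intro N
        have : 0 < k * (n + N) := Nat.mul_pos hk0 (by omega)
        exact_mod_cast this
      have hof := ENNReal.tendsto_ofReal hreal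
      have hlim : ENNReal.ofReal ((m : ℝ) / (k : ℝ)) = (m : ℝ≥0∞) / (k : ℝ≥0∞) := by
        rw [ENNReal.ofReal_div_of_pos (by exact_mod_cast hk0), ENNReal.ofReal_natCast,
          ENNReal.ofReal_natCast]
      rw [hlim] at hof
      refine hof.congr fun N => ?_
      rw [ENNReal.ofReal_div_of_pos (hpos N), ENNReal.ofReal_natCast, ENNReal.ofReal_natCast]
    have hev : ∀ᶠ N : ℕ in atTop,
        c' ≤ ((m * (N + 1) : ℕ) : ℝ≥0∞) / ((k * (n + N) : ℕ) : ℝ≥0∞) :=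
      (htend.eventually (eventually_gt_nhds hcmk)).mono fun N hN => hN.le
    apply le_limsup_of_frequently_le'
    rw [Filter.frequently_atTop]
    intro M₀
    obtain ⟨N, hN1, hN2⟩ := (hev.and (Filter.eventually_ge_atTop M₀)).exists
    refine ⟨k * (n + N), ?_, ?_⟩
    · calc M₀ ≤ N := hN2
        _ ≤ n + N := Nat.le_add_left _ _
        _ ≤ k * (n + N) := Nat.le_mul_of_pos_left _ hk0
    · refine le_trans hN1 ?_
      apply ENNReal.div_le_div_right
      exact_mod_cast (mem_pow_iff_le_nuI I _ _).1 (hmem N)
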